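/- Let G be a Hausdorff topological group. If for every identity neighborhood U there exists a map α : G → Sym(G) with α(g)(h) ∈ U g h for all g, h ∈ G such that the subgroup Γ(α) of Sym(G) generated by the image of α acts amenably on the set G, then G is amenable as a topological group. -/

import Mathlib

/-- Bounded right-uniformly continuous real functions on a topological group. -/
def RUCb (G : Type*) [Group G] [TopologicalSpace G] : Set (G → ℝ) :=
  {f | (∃ C, ∀ x, |f x| ≤ C) ∧
    ∀ ε > (0:ℝ), ∃ U ∈ nhds (1 : G), ∀ x y : G, x * y⁻¹ ∈ U → |f x - f y| ≤ ε}

/-- A mean on a set `D` of real functions on `X`: positive, normalized, linear on `D`. -/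
def IsMeanOn (X : Type*) (D : Set (X → ℝ)) (m : (X → ℝ) → ℝ) : Prop :=
  m (fun _ => 1) = 1 ∧
  (∀ f ∈ D, ∀ g ∈ D, m (f + g) = m f + m g) ∧
  (∀ (c : ℝ), ∀ f ∈ D, m (c • f) = c * m f) ∧
  (∀ f ∈ D, (∀ x, 0 ≤ f x) → 0 ≤ m f)

/-- A topological group is amenable if `RUC_b(G)` admits a left-invariant mean. -/
def TopAmenable (G : Type*) [Group G] [TopologicalSpace G] : Prop :=
  ∃ m : (G → ℝ) → ℝ, IsMeanOn G (RUCb G) m ∧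
    ∀ f ∈ RUCb G, ∀ g : G, m (fun x => f (g * x)) = m f

/-- The bounded real functions on `X` (the space `ℓ∞(X)`). -/
def Bdd (X : Type*) : Set (X → ℝ) := {f : X → ℝ | ∃ C, ∀ x, |f x| ≤ C}

lemma bdd_const {X : Type*} (c : ℝ) : (fun _ : X => c) ∈ Bdd X :=
  ⟨|c|, fun _ => le_refl _⟩

lemma bdd_add {X : Type*} {f g : X → ℝ} (hf : f ∈ Bdd X) (hg : g ∈ Bdd X) :
    f + g ∈ Bdd X := by
  obtain ⟨C, hC⟩ := hf; obtain ⟨D, hD⟩ := hg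
  exact ⟨C + D, fun x => (abs_add_le _ _).trans (add_le_add (hC x) (hD x))⟩

lemma bdd_smul {X : Type*} (c : ℝ) {f : X → ℝ} (hf : f ∈ Bdd X) : c • f ∈ Bdd X := by
  obtain ⟨C, hC⟩ := hf
  refine ⟨|c| * C, fun x => ?_⟩
  simp only [Pi.smul_apply, smul_eq_mul, abs_mul]
  exact mul_le_mul_of_nonneg_left (hC x) (abs_nonneg c)

lemma bdd_sub {X : Type*} {f g : X → ℝ} (hf : f ∈ Bdd X) (hg : g ∈ Bdd X) :
    f - g ∈ Bdd X := by
  have : f - g = f + (-1 : ℝ) • g := by funext x; simp; ring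
  rw [this]; exact bdd_add hf (bdd_smul _ hg)

lemma bdd_comp {X Y : Type*} {f : X → ℝ} (hf : f ∈ Bdd X) (σ : Y → X) :
    (fun y => f (σ y)) ∈ Bdd Y := by
  obtain ⟨C, hC⟩ := hf; exact ⟨C, fun y => hC (σ y)⟩

lemma mean_const {X : Type*} {m : (X → ℝ) → ℝ} (hm : IsMeanOn X (Bdd X) m) (c : ℝ) :
    m (fun _ => c) = c := by
  obtain ⟨h1, _, hsmul, _⟩ := hm
  have := hsmul c (fun _ => 1) (bdd_const 1)
  have e : c • (fun _ : X => (1:ℝ)) = fun _ : X => c := by funext x; simp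
  rw [e] at this
  rw [this, h1, mul_one]

lemma mean_mono {X : Type*} {m : (X → ℝ) → ℝ} (hm : IsMeanOn X (Bdd X) m)
    {f g : X → ℝ} (hf : f ∈ Bdd X) (hg : g ∈ Bdd X) (hle : ∀ x, f x ≤ g x) :
    m f ≤ m g := by
  obtain ⟨_, hadd, _, hpos⟩ := hm
  have hgf : g - f ∈ Bdd X := bdd_sub hg hf
  have e : f + (g - f) = g := by funext x; simp
  have h2 := hadd f hf (g - f) hgf
  rw [e] at h2
  have h3 := hpos (g - f) hgf (fun x => sub_nonneg.2 (hle x))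
  linarith

lemma mean_bound {X : Type*} {m : (X → ℝ) → ℝ} (hm : IsMeanOn X (Bdd X) m)
    {f : X → ℝ} {C : ℝ} (hC : ∀ x, |f x| ≤ C) : |m f| ≤ C := by
  have hf : f ∈ Bdd X := ⟨C, hC⟩
  have h1 : m f ≤ C := by
    have := mean_mono hm hf (bdd_const C) (fun x => (abs_le.1 (hC x)).2)
    rwa [mean_const hm] at this
  have h2 : -C ≤ m f := by
    have := mean_mono hm (bdd_const (-C)) hf (fun x => (abs_le.1 (hC x)).1)
    rwa [mean_const hm] at this
  exact abs_le.2 ⟨h2, h1⟩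

lemma mean_close {X : Type*} {m : (X → ℝ) → ℝ} (hm : IsMeanOn X (Bdd X) m)
    {f g : X → ℝ} (hf : f ∈ Bdd X) (hg : g ∈ Bdd X) {ε : ℝ}
    (hε : ∀ x, |f x - g x| ≤ ε) : |m f - m g| ≤ ε := by
  have hadd := hm.2.1
  have h1 : m f ≤ m g + ε := by
    have e : m (g + fun _ => ε) = m g + ε := by
      rw [hadd g hg (fun _ => ε) (bdd_const ε), mean_const hm]
    have := mean_mono hm hf (bdd_add hg (bdd_const ε))
      (fun x => by have := (abs_le.1 (hε x)).2; simp only [Pi.add_apply]; linarith)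
    rwa [e] at this
  have h2 : m g ≤ m f + ε := by
    have e : m (f + fun _ => ε) = m f + ε := by
      rw [hadd f hf (fun _ => ε) (bdd_const ε), mean_const hm]
    have := mean_mono hm hg (bdd_add hf (bdd_const ε))
      (fun x => by have := (abs_le.1 (hε x)).1; simp only [Pi.add_apply]; linarith)
    rwa [e] at this
  exact abs_le.2 ⟨by linarith, by linarith⟩

/-- If for every identity neighborhood `U` of a Hausdorff topological group `G` there is
`α : G → Sym(G)` with `α(g)(h) ∈ Ugh` for all `g, h` such that the group `Γ(α)` generated by
the image of `α` acts amenably on the set `G`, then `G` is amenable. -/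
theorem stmt_17 (G : Type*) [Group G] [TopologicalSpace G] [IsTopologicalGroup G] [T2Space G]
    (h : ∀ U ∈ nhds (1 : G), ∃ α : G → Equiv.Perm G,
      (∀ g x : G, α g x * (g * x)⁻¹ ∈ U) ∧
      ∃ m : (G → ℝ) → ℝ, IsMeanOn G (Bdd G) m ∧
        ∀ f ∈ Bdd G, ∀ γ ∈ Subgroup.closure (Set.range α),
          m (fun x => f (γ x)) = m f) :
    TopAmenable G := by
  classical
  set ι := {U : Set G // U ∈ nhds (1 : G)} with hι
  choose α hα m hm hinv using fun U : ι => h U.1 U.2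
  haveI hne : Nonempty ι := ⟨⟨Set.univ, Filter.univ_mem⟩⟩
  set F : Filter ι := ⨅ V : ι, Filter.principal {U : ι | (U : Set G) ⊆ (V : Set G)} with hF
  haveI hFne : F.NeBot := by
    apply Filter.iInf_neBot_of_directed
    · intro V W
      refine ⟨⟨(V : Set G) ∩ W, Filter.inter_mem V.2 W.2⟩, ?_, ?_⟩ <;>
        · show Filter.principal _ ≤ Filter.principal _
          rw [Filter.le_principal_iff, Filter.mem_principal]
          intro U hU
          simp only [Set.mem_setOf_eq] at hU ⊢
          exact hU.trans (by simp)
    · intro V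
      exact Filter.principal_neBot_iff.2 ⟨V, show (V : Set G) ⊆ V from subset_rfl⟩
  set 𝒰 : Ultrafilter ι := Ultrafilter.of F with h𝒰
  have hUV : ∀ V ∈ nhds (1 : G), ∀ᶠ U : ι in 𝒰, (U : Set G) ⊆ V := by
    intro V hV
    apply Ultrafilter.of_le F
    exact Filter.mem_iInf_of_mem ⟨V, hV⟩ (Filter.mem_principal_self _)
  set M : (G → ℝ) → ℝ := fun f => Filter.limUnder (𝒰 : Filter ι) (fun U => m U f) with hM
  have hlim : ∀ f ∈ Bdd G, Filter.Tendsto (fun U => m U f) (𝒰 : Filter ι) (nhds (M f)) := by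
    intro f hf
    obtain ⟨C, hC⟩ := hf
    have hle : (𝒰.map (fun U => m U f) : Filter ℝ) ≤ Filter.principal (Set.Icc (-C) C) := by
      rw [Ultrafilter.coe_map, Filter.le_principal_iff, Filter.mem_map]
      refine Filter.univ_mem' (fun U => ?_)
      exact abs_le.1 (mean_bound (hm U) hC)
    obtain ⟨a, _, ha⟩ := (isCompact_Icc).ultrafilter_le_nhds (𝒰.map (fun U => m U f)) hle
    rw [Ultrafilter.coe_map] at ha
    have ha' : Filter.Tendsto (fun U => m U f) (𝒰 : Filter ι) (nhds a) := ha
    have : M f = a := ha'.limUnder_eq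
    rw [this]; exact ha'
  refine ⟨M, ⟨?_, ?_, ?_, ?_⟩, ?_⟩
  · -- M 1 = 1
    have h1 : Filter.Tendsto (fun U => m U (fun _ => (1:ℝ))) (𝒰 : Filter ι) (nhds (M _)) :=
      hlim _ (bdd_const 1)
    have h2 : Filter.Tendsto (fun U => m U (fun _ => (1:ℝ))) (𝒰 : Filter ι) (nhds 1) := by
      have : (fun U => m U (fun _ => (1:ℝ))) = fun _ => (1:ℝ) := by
        funext U; exact (hm U).1
      rw [this]; exact tendsto_const_nhds
    exact tendsto_nhds_unique h1 h2
  · -- additivity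
    intro f hf g hg
    have hfB := hf.1; have hgB := hg.1
    have h1 := hlim (f + g) (bdd_add hfB hgB)
    have h2 : Filter.Tendsto (fun U => m U (f + g)) (𝒰 : Filter ι) (nhds (M f + M g)) := by
      have e : (fun U => m U (f + g)) = fun U => m U f + m U g := by
        funext U; exact (hm U).2.1 f hfB g hgB
      rw [e]; exact (hlim f hfB).add (hlim g hgB)
    exact tendsto_nhds_unique h1 h2
  · -- homogeneity
    intro c f hf
    have hfB := hf.1
    have h1 := hlim (c • f) (bdd_smul c hfB)
    have h2 : Filter.Tendsto (fun U => m U (c • f)) (𝒰 : Filter ι) (nhds (c * M f)) := by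
      have e : (fun U => m U (c • f)) = fun U => c * m U f := by
        funext U; exact (hm U).2.2.1 c f hfB
      rw [e]; exact (hlim f hfB).const_mul c
    exact tendsto_nhds_unique h1 h2
  · -- positivity
    intro f hf hpos
    exact ge_of_tendsto' (hlim f hf.1) (fun U => (hm U).2.2.2 f hf.1 hpos)
  · -- left invariance
    intro f hf g
    have hfB := hf.1
    have hgB : (fun x => f (g * x)) ∈ Bdd G := bdd_comp hfB _
    have key : ∀ ε > (0:ℝ), |M (fun x => f (g * x)) - M f| ≤ ε := by
      intro ε hε
      obtain ⟨V, hV, hV2⟩ := hf.2 ε hε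
      have hev : ∀ᶠ U : ι in (𝒰 : Filter ι),
          |m U (fun x => f (g * x)) - m U f| ≤ ε := by
        filter_upwards [hUV V hV] with U hUsub
        have h1 : m U (fun x => f (α U g x)) = m U f :=
          hinv U f hfB (α U g) (Subgroup.subset_closure ⟨g, rfl⟩)
        have h2 : |m U (fun x => f (g * x)) - m U (fun x => f (α U g x))| ≤ ε := by
          apply mean_close (hm U) hgB (bdd_comp hfB _)
          intro x
          have hmem : α U g x * (g * x)⁻¹ ∈ V := hUsub (hα U g x)
          have := hV2 (α U g x) (g * x) hmem
          rw [abs_sub_comm] at this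
          exact this
        rw [h1] at h2
        exact h2
      have htend : Filter.Tendsto (fun U => |m U (fun x => f (g * x)) - m U f|)
          (𝒰 : Filter ι) (nhds |M (fun x => f (g * x)) - M f|) :=
        ((hlim _ hgB).sub (hlim f hfB)).abs
      exact le_of_tendsto htend hev
    have : |M (fun x => f (g * x)) - M f| ≤ 0 := by
      by_contra hc
      push_neg at hc
      have := key (|M (fun x => f (g * x)) - M f| / 2) (by linarith)
      linarith
    have := abs_nonneg (M (fun x => f (g * x)) - M f)
    have heq : |M (fun x => f (g * x)) - M f| = 0 := le_antisymm ‹_› ‹_›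
    have := abs_eq_zero.1 heq
    linarith [sub_eq_zero.1 this]
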